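/- Let G be the parallel composition of two-terminal graphs G_1 and G_2 with common source s and sink t, sharing no other vertices and with no common edge. Suppose G_1 has a path cover containing an s–t path P together with a path Q that starts at t and does not contain s, and G_2 has a path cover containing an s–t path. Then merging the s–t path of G_2 with Q at t yields a path cover of G of size p_1 + p_2 − 1 containing an s–t path, where p_1, p_2 are the sizes of the two given covers. -/

import Mathlib

open SimpleGraph

/-- A simple path in a graph `G`, given by its two endpoints and a walk between them
which is a path and is non-trivial (contains at least one edge). -/
structure PathIn {V : Type*} (G : SimpleGraph V) where
  a : V
  b : V
  walk : G.Walk a b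
  isPath : walk.IsPath
  nonNil : ¬ walk.Nil

/-- A path cover of `G`: a collection of pairwise edge-disjoint simple paths
whose union covers every edge of `G` exactly once. -/
def IsPathCover {V : Type*} (G : SimpleGraph V) (ps : List (PathIn G)) : Prop :=
  (ps.Pairwise fun p q => ∀ e ∈ p.walk.edges, e ∉ q.walk.edges) ∧
  ∀ e : Sym2 V, e ∈ G.edgeSet ↔ ∃ p ∈ ps, e ∈ p.walk.edges

section Aux

variable {V : Type*} {G G₁ G₂ : SimpleGraph V}

/-- Every vertex on a non-trivial walk is in the support of the graph. -/
lemma walk_support_subset_support {a b : V} (w : G.Walk a b) :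
    ∀ v ∈ w.support, ¬ w.Nil → v ∈ G.support := by
  induction w with
  | nil => intro v hv hn; exact absurd SimpleGraph.Walk.Nil.nil hn
  | @cons u x b h p ih =>
    intro v hv _
    rw [SimpleGraph.Walk.support_cons, List.mem_cons] at hv
    rcases hv with rfl | hv
    · exact G.mem_support.mpr ⟨x, h⟩
    · by_cases hp : p.Nil
      · rw [SimpleGraph.Walk.nil_iff_support_eq] at hp
        rw [hp, List.mem_singleton] at hv
        subst hv
        exact G.mem_support.mpr ⟨u, h.symm⟩
      · exact ih v hv hp

/-- Appending two paths that meet only at the common endpoint gives a path. -/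
lemma isPath_append_of_inter {u v w : V} {p : G.Walk u v} {q : G.Walk v w}
    (hp : p.IsPath) (hq : q.IsPath)
    (h : ∀ x ∈ p.support, x ∈ q.support → x = v) : (p.append q).IsPath := by
  rw [SimpleGraph.Walk.isPath_def, SimpleGraph.Walk.support_append]
  refine List.Nodup.append hp.support_nodup ?_ ?_
  · have := hq.support_nodup
    rw [q.support_eq_cons, List.nodup_cons] at this
    exact this.2
  · intro x hx hx'
    have hxq : x ∈ q.support := List.mem_of_mem_tail hx'
    have hxv : x = v := h x hx hxq
    subst hxv
    have := hq.support_nodup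
    rw [q.support_eq_cons, List.nodup_cons] at this
    exact this.1 hx'

/-- Lift a path from a subgraph to a supergraph. -/
def PathIn.lift (p : PathIn G) (hGH : G ≤ G₂) : PathIn G₂ where
  a := p.a
  b := p.b
  walk := p.walk.transfer G₂ (fun e he =>
    SimpleGraph.edgeSet_subset_edgeSet.mpr hGH (p.walk.edges_subset_edgeSet he))
  isPath := p.isPath.transfer _
  nonNil := by
    rw [SimpleGraph.Walk.nil_iff_support_eq, SimpleGraph.Walk.support_transfer]
    intro h
    exact p.nonNil (SimpleGraph.Walk.nil_iff_support_eq.mpr h)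

@[simp] lemma PathIn.lift_edges (p : PathIn G) (hGH : G ≤ G₂) :
    (p.lift hGH).walk.edges = p.walk.edges :=
  SimpleGraph.Walk.edges_transfer _ _

@[simp] lemma PathIn.lift_a (p : PathIn G) (hGH : G ≤ G₂) : (p.lift hGH).a = p.a := rfl
@[simp] lemma PathIn.lift_b (p : PathIn G) (hGH : G ≤ G₂) : (p.lift hGH).b = p.b := rfl

lemma disj_symm {p q : PathIn G} (h : ∀ e ∈ p.walk.edges, e ∉ q.walk.edges) :
    ∀ e ∈ q.walk.edges, e ∉ p.walk.edges := fun e he he' => h e he' he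

end Aux

/-- Parallel composition: let G₁ and G₂ be two-terminal graphs with common source s and
common sink t, sharing no other vertex and no edge. If G₁ has a path cover containing
an s–t path P together with a path Q that starts at t and does not contain s, and G₂
has a path cover containing an s–t path, then the parallel composition G₁ ⊔ G₂ has a
path cover of size p₁ + p₂ − 1 containing an s–t path, where p₁ and p₂ are the sizes
of the two given covers. -/
theorem stmt_7 {V : Type*} (G₁ G₂ : SimpleGraph V) (s t : V) (hst : s ≠ t)
    (hshare : ∀ v ∈ G₁.support, v ∈ G₂.support → v = s ∨ v = t)
    (hedge : ∀ e ∈ G₁.edgeSet, e ∉ G₂.edgeSet)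
    (ps₁ : List (PathIn G₁)) (h₁ : IsPathCover G₁ ps₁)
    (P Q : PathIn G₁) (hP : P ∈ ps₁) (hQ : Q ∈ ps₁) (hPQ : P ≠ Q)
    (hPst : (P.a = s ∧ P.b = t) ∨ (P.a = t ∧ P.b = s))
    (hQa : Q.a = t) (hQs : s ∉ Q.walk.support)
    (ps₂ : List (PathIn G₂)) (h₂ : IsPathCover G₂ ps₂)
    (h₂st : ∃ p ∈ ps₂, (p.a = s ∧ p.b = t) ∨ (p.a = t ∧ p.b = s)) :
    ∃ qs : List (PathIn (G₁ ⊔ G₂)), IsPathCover (G₁ ⊔ G₂) qs ∧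
      qs.length + 1 = ps₁.length + ps₂.length ∧
      ∃ q ∈ qs, (q.a = s ∧ q.b = t) ∨ (q.a = t ∧ q.b = s) := by
  classical
  obtain ⟨R, hR, hRst⟩ := h₂st
  -- orient R as an s–t walk
  obtain ⟨w₂, hw₂p, hw₂n, hw₂e, hw₂s⟩ :
      ∃ w : G₂.Walk s t, w.IsPath ∧ ¬ w.Nil ∧
        (∀ e, e ∈ w.edges ↔ e ∈ R.walk.edges) ∧
        (∀ v, v ∈ w.support ↔ v ∈ R.walk.support) := by
    rcases hRst with ⟨h1, h2⟩ | ⟨h1, h2⟩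
    · refine ⟨R.walk.copy h1 h2, by simp [R.isPath], ?_, by simp, by simp⟩
      have := R.nonNil
      rw [SimpleGraph.Walk.nil_iff_length_eq] at this ⊢
      simpa using this
    · refine ⟨R.walk.reverse.copy h2 h1, by simp [R.isPath.reverse], ?_, by simp, by simp⟩
      have := R.nonNil
      rw [SimpleGraph.Walk.nil_iff_length_eq] at this ⊢
      simpa using this
  have hle₁ : G₁ ≤ G₁ ⊔ G₂ := le_sup_left
  have hle₂ : G₂ ≤ G₁ ⊔ G₂ := le_sup_right
  -- lifted walks
  have hedgesub₂ : ∀ e ∈ w₂.edges, e ∈ (G₁ ⊔ G₂).edgeSet := fun e he =>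
    SimpleGraph.edgeSet_subset_edgeSet.mpr hle₂ (w₂.edges_subset_edgeSet he)
  have hedgesubQ : ∀ e ∈ Q.walk.edges, e ∈ (G₁ ⊔ G₂).edgeSet := fun e he =>
    SimpleGraph.edgeSet_subset_edgeSet.mpr hle₁ (Q.walk.edges_subset_edgeSet he)
  set Rw : (G₁ ⊔ G₂).Walk s t := w₂.transfer _ hedgesub₂ with hRw
  set Qw : (G₁ ⊔ G₂).Walk t Q.b := (Q.walk.transfer _ hedgesubQ).copy hQa rfl with hQw
  have hRw_sup : Rw.support = w₂.support := SimpleGraph.Walk.support_transfer _ _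
  have hQw_sup : Qw.support = Q.walk.support := by
    rw [hQw, SimpleGraph.Walk.support_copy, SimpleGraph.Walk.support_transfer]
  have hRw_edges : Rw.edges = w₂.edges := SimpleGraph.Walk.edges_transfer _ _
  have hQw_edges : Qw.edges = Q.walk.edges := by
    rw [hQw, SimpleGraph.Walk.edges_copy, SimpleGraph.Walk.edges_transfer]
  -- the merged path M
  have hMpath : (Rw.append Qw).IsPath := by
    refine isPath_append_of_inter (hw₂p.transfer _) ?_ ?_
    · rw [hQw]
      exact (SimpleGraph.Walk.isPath_copy _ _ _).mpr (Q.isPath.transfer _)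
    · intro x hx hx'
      rw [hRw_sup] at hx
      rw [hQw_sup] at hx'
      have hx₂ : x ∈ G₂.support := walk_support_subset_support w₂ x hx hw₂n
      have hx₁ : x ∈ G₁.support := walk_support_subset_support Q.walk x hx' Q.nonNil
      rcases hshare x hx₁ hx₂ with rfl | rfl
      · exact absurd hx' hQs
      · rfl
  have hMnonNil : ¬ (Rw.append Qw).Nil := by
    rw [SimpleGraph.Walk.nil_iff_length_eq, SimpleGraph.Walk.length_append]
    have := hw₂n
    rw [SimpleGraph.Walk.nil_iff_length_eq] at this
    have : Rw.length = w₂.length := by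
      rw [hRw]
      rw [← SimpleGraph.Walk.length_edges, SimpleGraph.Walk.edges_transfer,
        SimpleGraph.Walk.length_edges]
    omega
  set M : PathIn (G₁ ⊔ G₂) := ⟨s, Q.b, Rw.append Qw, hMpath, hMnonNil⟩ with hM
  have hM_edges : ∀ e, e ∈ M.walk.edges ↔ e ∈ R.walk.edges ∨ e ∈ Q.walk.edges := by
    intro e
    rw [hM]
    simp only [SimpleGraph.Walk.edges_append, List.mem_append, hRw_edges, hQw_edges, hw₂e]
  -- split the covers at Q and R
  obtain ⟨l₁, l₂, hps₁⟩ := List.append_of_mem hQ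
  obtain ⟨m₁, m₂, hps₂⟩ := List.append_of_mem hR
  have hpw₁ := h₁.1
  rw [hps₁, List.pairwise_append, List.pairwise_cons] at hpw₁
  have hpw₂ := h₂.1
  rw [hps₂, List.pairwise_append, List.pairwise_cons] at hpw₂
  have hdisjQ : ∀ p ∈ l₁ ++ l₂, ∀ e ∈ Q.walk.edges, e ∉ p.walk.edges := by
    intro p hp
    rcases List.mem_append.mp hp with h | h
    · exact disj_symm (hpw₁.2.2 p h Q (List.mem_cons_self))
    · exact hpw₁.2.1.1 p h
  have hdisjR : ∀ p ∈ m₁ ++ m₂, ∀ e ∈ R.walk.edges, e ∉ p.walk.edges := by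
    intro p hp
    rcases List.mem_append.mp hp with h | h
    · exact disj_symm (hpw₂.2.2 p h R (List.mem_cons_self))
    · exact hpw₂.2.1.1 p h
  have hpwL : (l₁ ++ l₂).Pairwise (fun p q => ∀ e ∈ p.walk.edges, e ∉ q.walk.edges) :=
    List.pairwise_append.mpr ⟨hpw₁.1, hpw₁.2.1.2,
      fun a ha b hb => hpw₁.2.2 a ha b (List.mem_cons_of_mem _ hb)⟩
  have hpwM : (m₁ ++ m₂).Pairwise (fun p q => ∀ e ∈ p.walk.edges, e ∉ q.walk.edges) :=
    List.pairwise_append.mpr ⟨hpw₂.1, hpw₂.2.1.2,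
      fun a ha b hb => hpw₂.2.2 a ha b (List.mem_cons_of_mem _ hb)⟩
  set A : List (PathIn (G₁ ⊔ G₂)) := (l₁ ++ l₂).map (fun p => p.lift hle₁) with hA
  set B : List (PathIn (G₁ ⊔ G₂)) := (m₁ ++ m₂).map (fun p => p.lift hle₂) with hB
  refine ⟨M :: (A ++ B), ⟨?_, ?_⟩, ?_, ?_⟩
  · -- pairwise edge-disjoint
    rw [List.pairwise_cons]
    constructor
    · intro q hq e heM heq
      rcases List.mem_append.mp hq with hq | hq
      · obtain ⟨p, hp, rfl⟩ := List.mem_map.mp hq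
        rw [PathIn.lift_edges] at heq
        rcases (hM_edges e).mp heM with hR' | hQ'
        · exact hedge e (p.walk.edges_subset_edgeSet heq) (R.walk.edges_subset_edgeSet hR')
        · exact hdisjQ p hp e hQ' heq
      · obtain ⟨p, hp, rfl⟩ := List.mem_map.mp hq
        rw [PathIn.lift_edges] at heq
        rcases (hM_edges e).mp heM with hR' | hQ'
        · exact hdisjR p hp e hR' heq
        · exact hedge e (Q.walk.edges_subset_edgeSet hQ') (p.walk.edges_subset_edgeSet heq)
    · rw [List.pairwise_append]
      refine ⟨?_, ?_, ?_⟩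
      · rw [hA, List.pairwise_map]
        exact hpwL.imp (fun h => by simp only [PathIn.lift_edges]; exact h)
      · rw [hB, List.pairwise_map]
        exact hpwM.imp (fun h => by simp only [PathIn.lift_edges]; exact h)
      · intro a ha b hb
        obtain ⟨p, hp, rfl⟩ := List.mem_map.mp ha
        obtain ⟨q, hqm, rfl⟩ := List.mem_map.mp hb
        simp only [PathIn.lift_edges]
        exact fun e he he' =>
          hedge e (p.walk.edges_subset_edgeSet he) (q.walk.edges_subset_edgeSet he')
  · -- covers every edge
    intro e
    constructor
    · intro he
      simp only [SimpleGraph.edgeSet_sup, Set.mem_union] at he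
      rcases he with he | he
      · obtain ⟨p, hp, hpe⟩ := (h₁.2 e).mp he
        rw [hps₁] at hp
        rcases List.mem_append.mp hp with hp | hp
        · refine ⟨p.lift hle₁, ?_, by rw [PathIn.lift_edges]; exact hpe⟩
          exact List.mem_cons_of_mem _ (List.mem_append_left _
            (List.mem_map.mpr ⟨p, List.mem_append_left _ hp, rfl⟩))
        · rcases List.mem_cons.mp hp with rfl | hp
          · exact ⟨M, List.mem_cons_self, (hM_edges e).mpr (Or.inr hpe)⟩
          · refine ⟨p.lift hle₁, ?_, by rw [PathIn.lift_edges]; exact hpe⟩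
            exact List.mem_cons_of_mem _ (List.mem_append_left _
              (List.mem_map.mpr ⟨p, List.mem_append_right _ hp, rfl⟩))
      · obtain ⟨p, hp, hpe⟩ := (h₂.2 e).mp he
        rw [hps₂] at hp
        rcases List.mem_append.mp hp with hp | hp
        · refine ⟨p.lift hle₂, ?_, by rw [PathIn.lift_edges]; exact hpe⟩
          exact List.mem_cons_of_mem _ (List.mem_append_right _
            (List.mem_map.mpr ⟨p, List.mem_append_left _ hp, rfl⟩))
        · rcases List.mem_cons.mp hp with rfl | hp
          · exact ⟨M, List.mem_cons_self, (hM_edges e).mpr (Or.inl hpe)⟩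
          · refine ⟨p.lift hle₂, ?_, by rw [PathIn.lift_edges]; exact hpe⟩
            exact List.mem_cons_of_mem _ (List.mem_append_right _
              (List.mem_map.mpr ⟨p, List.mem_append_right _ hp, rfl⟩))
    · rintro ⟨q, _, hqe⟩
      exact q.walk.edges_subset_edgeSet hqe
  · -- length
    rw [hps₁, hps₂]
    simp only [List.length_cons, List.length_append, hA, hB, List.length_map]
    omega
  · -- the lifted P is an s–t path
    have hPL : P ∈ l₁ ++ l₂ := by
      rw [hps₁] at hP
      rcases List.mem_append.mp hP with h | h
      · exact List.mem_append_left _ h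
      · rcases List.mem_cons.mp h with rfl | h
        · exact absurd rfl hPQ
        · exact List.mem_append_right _ h
    refine ⟨P.lift hle₁, ?_, by simpa using hPst⟩
    exact List.mem_cons_of_mem _ (List.mem_append_left _ (List.mem_map.mpr ⟨P, hPL, rfl⟩))
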